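/- Let 1 < p ≤ ∞. There is a constant C = C(p) such that for all f ∈ L_p[−1,1] and all t > 0, K_{2,φ}(f, t²)_p ≤ C K_2(f, (d/dx)(1−x²)(d/dx), t²)_p, where K_2(f, (d/dx)(1−x²)(d/dx), t²)_p = inf{‖f − g‖_{L_p[−1,1]} + t² ‖((1−x²)g′(x))′‖_{L_p[−1,1]}}, the infimum over all g with g and (1−x²)g′ locally absolutely continuous on (−1,1) and ((1−x²)g′)′ ∈ L_p[−1,1]. -/

import Mathlib

open MeasureTheory Set ENNReal NNReal

noncomputable section

/-- `φ(x) = √(1 - x²)`. -/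
def phi (x : ℝ) : ℝ := Real.sqrt (1 - x ^ 2)

/-- The symmetric difference `Δ^r_{hφ} f(x)`, set to `0` when the interval
`[x - (r/2)hφ(x), x + (r/2)hφ(x)]` is not contained in `[-1,1]`. -/
def symmDiffPhi (r : ℕ) (h : ℝ) (f : ℝ → ℝ) (x : ℝ) : ℝ :=
  if x - (r : ℝ) / 2 * h * phi x ∈ Icc (-1 : ℝ) 1 ∧
      x + (r : ℝ) / 2 * h * phi x ∈ Icc (-1 : ℝ) 1 then
    ∑ k ∈ Finset.range (r + 1),
      (-1 : ℝ) ^ k * (r.choose k : ℝ) * f (x + ((r : ℝ) / 2 - (k : ℝ)) * h * phi x)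
  else 0

/-- The `L_p` (quasi-)norm on `[-1,1]`, valued in `ℝ≥0∞`. -/
def lpI (p : ℝ≥0∞) (g : ℝ → ℝ) : ℝ≥0∞ :=
  eLpNorm g p (volume.restrict (Icc (-1 : ℝ) 1))

/-- The Ditzian–Totik modulus of smoothness `ω_φ^r(f,t)_p`. -/
def omegaPhi (r : ℕ) (f : ℝ → ℝ) (t : ℝ) (p : ℝ≥0∞) : ℝ≥0∞ :=
  ⨆ (h : ℝ) (_ : 0 < |h| ∧ |h| ≤ t), lpI p (symmDiffPhi r h f)

/-- Best approximation `E_n(f)_p` by algebraic polynomials of degree `< n`. -/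
def bestE (n : ℕ) (f : ℝ → ℝ) (p : ℝ≥0∞) : ℝ≥0∞ :=
  ⨅ (P : Polynomial ℝ) (_ : P.degree < (n : ℕ)), lpI p fun x => f x - P.eval x

/-- The Ditzian–Totik `K`-functional
`K_{r,φ}(f, s)_p = inf_g (‖f - g‖_p + s ‖φ^r g^{(r)}‖_p)`. -/
def KfuncPhi (r : ℕ) (f : ℝ → ℝ) (s : ℝ) (p : ℝ≥0∞) : ℝ≥0∞ :=
  ⨅ (g : ℝ → ℝ) (_ : ContDiff ℝ r g),
    lpI p (fun x => f x - g x) +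
      ENNReal.ofReal s * lpI p fun x => phi x ^ r * iteratedDeriv r g x

/-- The Legendre differential expression `g ↦ ((1 - x²) g′)′`. -/
def legendreD (g : ℝ → ℝ) : ℝ → ℝ :=
  deriv fun x => (1 - x ^ 2) * deriv g x

/-- The `K`-functional `K₂(f, (d/dx)(1-x²)(d/dx), s)_p`. -/
def Kfunc2Legendre (f : ℝ → ℝ) (s : ℝ) (p : ℝ≥0∞) : ℝ≥0∞ :=
  ⨅ (g : ℝ → ℝ) (_ : ContDiff ℝ 2 g),
    lpI p (fun x => f x - g x) + ENNReal.ofReal s * lpI p (legendreD g)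


variable {g : ℝ → ℝ}


lemma contDiff_G (hg : ContDiff ℝ 2 g) :
    ContDiff ℝ 1 (fun x : ℝ => (1 - x ^ 2) * deriv g x) := by
  have h1 : ContDiff ℝ 1 (deriv g) := (contDiff_succ_iff_deriv.mp (show ContDiff ℝ (1+1 : ℕ) g from hg)).2.2
  have h2 : ContDiff ℝ 1 (fun x : ℝ => (1 - x ^ 2)) := by fun_prop
  exact h2.mul h1

lemma legendreD_cont (hg : ContDiff ℝ 2 g) : Continuous (legendreD g) :=
  (contDiff_G hg).continuous_deriv le_rfl

lemma G_eq (hg : ContDiff ℝ 2 g) (x : ℝ) :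
    (1 - x ^ 2) * deriv g x = -∫ t in x..(1:ℝ), legendreD g t := by
  have h := intervalIntegral.integral_deriv_eq_sub
    (f := fun x : ℝ => (1 - x ^ 2) * deriv g x) (a := x) (b := 1)
    (fun t _ => ((contDiff_G hg).differentiable one_ne_zero).differentiableAt)
    (((legendreD_cont hg)).intervalIntegrable _ _)
  simp only [legendreD] at h ⊢
  rw [h]; ring

lemma G_eq' (hg : ContDiff ℝ 2 g) (x : ℝ) :
    (1 - x ^ 2) * deriv g x = ∫ t in (-1:ℝ)..x, legendreD g t := by
  have h := intervalIntegral.integral_deriv_eq_sub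
    (f := fun x : ℝ => (1 - x ^ 2) * deriv g x) (a := -1) (b := x)
    (fun t _ => ((contDiff_G hg).differentiable one_ne_zero).differentiableAt)
    (((legendreD_cont hg)).intervalIntegrable _ _)
  simp only [legendreD] at h ⊢
  rw [h]; ring

lemma deriv_bound_right (hg : ContDiff ℝ 2 g) {x : ℝ} (hx : x ∈ Ico (0:ℝ) 1) :
    (‖deriv g x‖₊ : ℝ≥0∞) ≤
      (ENNReal.ofReal (1 - x))⁻¹ * ∫⁻ t in Icc x 1, (‖legendreD g t‖₊ : ℝ≥0∞) := by
  obtain ⟨h0, h1⟩ := hx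
  have h1x : (0:ℝ) < 1 - x := by linarith
  have hL : IntegrableOn (legendreD g) (Ioc x 1) := by
    exact ((legendreD_cont hg).integrableOn_Icc (a := x) (b := 1)).mono_set Ioc_subset_Icc_self
  have hreal : |deriv g x| ≤ (1 - x)⁻¹ * ∫ t in x..(1:ℝ), |legendreD g t| := by
    rw [le_inv_mul_iff₀ h1x]
    calc (1 - x) * |deriv g x| ≤ (1 - x ^ 2) * |deriv g x| := by
          apply mul_le_mul_of_nonneg_right _ (abs_nonneg _); nlinarith
      _ = |(1 - x ^ 2) * deriv g x| := by
          rw [abs_mul, abs_of_nonneg (by nlinarith : (0:ℝ) ≤ 1 - x ^ 2)]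
      _ = |∫ t in x..(1:ℝ), legendreD g t| := by rw [G_eq hg x, abs_neg]
      _ ≤ ∫ t in x..(1:ℝ), |legendreD g t| :=
          intervalIntegral.abs_integral_le_integral_abs h1.le
  calc (‖deriv g x‖₊ : ℝ≥0∞) = ENNReal.ofReal |deriv g x| := Real.enorm_eq_ofReal_abs _
    _ ≤ ENNReal.ofReal ((1 - x)⁻¹ * ∫ t in x..(1:ℝ), |legendreD g t|) :=
        ENNReal.ofReal_le_ofReal hreal
    _ = (ENNReal.ofReal (1 - x))⁻¹ * ENNReal.ofReal (∫ t in x..(1:ℝ), |legendreD g t|) := by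
        rw [ENNReal.ofReal_mul (by positivity), ENNReal.ofReal_inv_of_pos h1x]
    _ ≤ (ENNReal.ofReal (1 - x))⁻¹ * ∫⁻ t in Icc x 1, (‖legendreD g t‖₊ : ℝ≥0∞) := by
        gcongr
        rw [intervalIntegral.integral_of_le h1.le]
        have : ENNReal.ofReal (∫ t in Ioc x 1, |legendreD g t|)
            = ∫⁻ t in Ioc x 1, (‖legendreD g t‖₊ : ℝ≥0∞) := by
          simpa [Real.norm_eq_abs, enorm_eq_nnnorm] using ofReal_integral_norm_eq_lintegral_enorm hL
        rw [this]
        exact lintegral_mono_set Ioc_subset_Icc_self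

lemma deriv_bound_left (hg : ContDiff ℝ 2 g) {x : ℝ} (hx : x ∈ Ioc (-1:ℝ) 0) :
    (‖deriv g x‖₊ : ℝ≥0∞) ≤
      (ENNReal.ofReal (1 + x))⁻¹ * ∫⁻ t in Icc (-1) x, (‖legendreD g t‖₊ : ℝ≥0∞) := by
  obtain ⟨h1, h0⟩ := hx
  have h1x : (0:ℝ) < 1 + x := by linarith
  have hL : IntegrableOn (legendreD g) (Ioc (-1) x) := by
    exact ((legendreD_cont hg).integrableOn_Icc (a := -1) (b := x)).mono_set Ioc_subset_Icc_self
  have hreal : |deriv g x| ≤ (1 + x)⁻¹ * ∫ t in (-1:ℝ)..x, |legendreD g t| := by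
    rw [le_inv_mul_iff₀ h1x]
    calc (1 + x) * |deriv g x| ≤ (1 - x ^ 2) * |deriv g x| := by
          apply mul_le_mul_of_nonneg_right _ (abs_nonneg _); nlinarith
      _ = |(1 - x ^ 2) * deriv g x| := by
          rw [abs_mul, abs_of_nonneg (by nlinarith : (0:ℝ) ≤ 1 - x ^ 2)]
      _ = |∫ t in (-1:ℝ)..x, legendreD g t| := by rw [G_eq' hg x]
      _ ≤ ∫ t in (-1:ℝ)..x, |legendreD g t| :=
          intervalIntegral.abs_integral_le_integral_abs h1.le
  calc (‖deriv g x‖₊ : ℝ≥0∞) = ENNReal.ofReal |deriv g x| := Real.enorm_eq_ofReal_abs _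
    _ ≤ ENNReal.ofReal ((1 + x)⁻¹ * ∫ t in (-1:ℝ)..x, |legendreD g t|) :=
        ENNReal.ofReal_le_ofReal hreal
    _ = (ENNReal.ofReal (1 + x))⁻¹ * ENNReal.ofReal (∫ t in (-1:ℝ)..x, |legendreD g t|) := by
        rw [ENNReal.ofReal_mul (by positivity), ENNReal.ofReal_inv_of_pos h1x]
    _ ≤ (ENNReal.ofReal (1 + x))⁻¹ * ∫⁻ t in Icc (-1) x, (‖legendreD g t‖₊ : ℝ≥0∞) := by
        gcongr
        rw [intervalIntegral.integral_of_le h1.le]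
        have : ENNReal.ofReal (∫ t in Ioc (-1:ℝ) x, |legendreD g t|)
            = ∫⁻ t in Ioc (-1:ℝ) x, (‖legendreD g t‖₊ : ℝ≥0∞) := by
          simpa [Real.norm_eq_abs, enorm_eq_nnnorm] using ofReal_integral_norm_eq_lintegral_enorm hL
        rw [this]
        exact lintegral_mono_set Ioc_subset_Icc_self

lemma intInteg_oneSub_rpow {a b r : ℝ} (hab : a ≤ b) (hb : b ≤ 1)
    (h : -1 < r ∨ b < 1) : IntervalIntegrable (fun t => (1 - t) ^ r) volume a b := by
  rcases h with h | h
  · have := (intervalIntegral.intervalIntegrable_rpow' (a := 1 - b) (b := 1 - a) h).comp_sub_left 1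
    simpa using this.symm
  · apply ContinuousOn.intervalIntegrable
    apply ContinuousOn.rpow_const
    · fun_prop
    · intro t ht
      rw [uIcc_of_le hab] at ht
      left
      have : t ≤ b := ht.2
      nlinarith [h]

lemma lint_oneSub_rpow {a b r : ℝ} (hab : a ≤ b) (hb : b ≤ 1) (h : -1 < r ∨ b < 1)
    (hr : r ≠ -1) :
    ∫⁻ t in Ioc a b, ENNReal.ofReal ((1 - t) ^ r)
      = ENNReal.ofReal (((1 - a) ^ (r + 1) - (1 - b) ^ (r + 1)) / (r + 1)) := by
  have hI : IntegrableOn (fun t => (1 - t) ^ r) (Ioc a b) :=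
    (intervalIntegrable_iff_integrableOn_Ioc_of_le hab).mp (intInteg_oneSub_rpow hab hb h)
  rw [← ofReal_integral_eq_lintegral_ofReal hI]
  · congr 1
    rw [← intervalIntegral.integral_of_le hab]
    have comp := intervalIntegral.integral_comp_sub_left (a := a) (b := b)
      (fun s => s ^ r) 1
    have h' : -1 < r ∨ r ≠ -1 ∧ (0:ℝ) ∉ Set.uIcc (1 - b) (1 - a) := by
      rcases h with h | h
      · exact Or.inl h
      · refine Or.inr ⟨hr, ?_⟩
        rw [Set.mem_uIcc]
        push_neg
        constructor <;> intro h1 <;> nlinarith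
    rw [comp, integral_rpow h']
  · filter_upwards [ae_restrict_mem measurableSet_Ioc] with t ht
    have : 0 ≤ 1 - t := by linarith [ht.2]
    positivity

lemma swap_lemma (W V : ℝ → ℝ≥0∞) (hW : Measurable W) (hV : Measurable V) :
    ∫⁻ x in Ico (0:ℝ) 1, W x * ∫⁻ t in Ico x 1, V t
      = ∫⁻ t in Ico (0:ℝ) 1, (∫⁻ x in Icc 0 t, W x) * V t := by
  set K : ℝ × ℝ → ℝ≥0∞ := fun p => if p.1 ≤ p.2 then W p.1 * V p.2 else 0 with hK
  have hKm : Measurable K :=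
    Measurable.ite (measurableSet_le measurable_fst measurable_snd)
      ((hW.comp measurable_fst).mul (hV.comp measurable_snd)) measurable_const
  have step1 : ∀ x ∈ Ico (0:ℝ) 1,
      W x * ∫⁻ t in Ico x 1, V t = ∫⁻ t in Ico (0:ℝ) 1, K (x, t) := by
    intro x hx
    have : ∀ t : ℝ, K (x, t) = (Ici x).indicator (fun t => W x * V t) t := by
      intro t; simp [hK, indicator, Set.mem_Ici]
    simp_rw [this]
    rw [lintegral_indicator measurableSet_Ici _, Measure.restrict_restrict measurableSet_Ici]
    have hs : Ici x ∩ Ico (0:ℝ) 1 = Ico x 1 := by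
      ext t
      simp only [mem_inter_iff, mem_Ici, mem_Ico]
      constructor
      · rintro ⟨h1, _, h3⟩; exact ⟨h1, h3⟩
      · rintro ⟨h1, h2⟩; exact ⟨h1, le_trans hx.1 h1, h2⟩
    rw [hs, lintegral_const_mul _ hV]
  have step2 : ∀ t ∈ Ico (0:ℝ) 1,
      (∫⁻ x in Ico (0:ℝ) 1, K (x, t)) = (∫⁻ x in Icc 0 t, W x) * V t := by
    intro t ht
    have : ∀ x : ℝ, K (x, t) = (Iic t).indicator (fun x => W x * V t) x := by
      intro x; simp [hK, indicator, Set.mem_Iic]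
    simp_rw [this]
    rw [lintegral_indicator measurableSet_Iic _, Measure.restrict_restrict measurableSet_Iic]
    have hs : Iic t ∩ Ico (0:ℝ) 1 = Icc 0 t := by
      ext x
      simp only [mem_inter_iff, mem_Iic, mem_Ico, mem_Icc]
      constructor
      · rintro ⟨h1, h2, _⟩; exact ⟨h2, h1⟩
      · rintro ⟨h1, h2⟩; exact ⟨h2, h1, lt_of_le_of_lt h2 ht.2⟩
    rw [hs, lintegral_mul_const _ hW]
  calc ∫⁻ x in Ico (0:ℝ) 1, W x * ∫⁻ t in Ico x 1, V t
      = ∫⁻ x in Ico (0:ℝ) 1, ∫⁻ t in Ico (0:ℝ) 1, K (x, t) :=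
        setLIntegral_congr_fun measurableSet_Ico step1
    _ = ∫⁻ t in Ico (0:ℝ) 1, ∫⁻ x in Ico (0:ℝ) 1, K (x, t) :=
        lintegral_lintegral_swap (hKm.aemeasurable)
    _ = ∫⁻ t in Ico (0:ℝ) 1, (∫⁻ x in Icc 0 t, W x) * V t :=
        setLIntegral_congr_fun measurableSet_Ico step2

set_option maxHeartbeats 2000000 in
lemma hardy {q : ℝ} (hq : 1 < q) (Λ : ℝ → ℝ≥0∞) (hΛ : Measurable Λ) :
    ∫⁻ x in Ico (0:ℝ) 1, ((ENNReal.ofReal (1 - x))⁻¹ * ∫⁻ t in Ico x 1, Λ t) ^ q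
      ≤ ENNReal.ofReal (2 ^ (q - 1) * (2 / (q - 1))) * ∫⁻ t in Ico (0:ℝ) 1, Λ t ^ q := by
  have hq0 : (0:ℝ) < q := lt_trans one_pos hq
  have hq1 : (0:ℝ) < q - 1 := by linarith
  set q' : ℝ := q / (q - 1) with hq'def
  have hpq : q.HolderConjugate q' := Real.HolderConjugate.conjExponent hq
  set θ : ℝ := (q - 1) / (2 * q) with hθdef
  have hθq : θ * q = (q - 1) / 2 := by rw [hθdef]; field_simp
  have hθq' : θ * q' = 1 / 2 := by rw [hθdef, hq'def]; field_simp
  have hq'q : 1 / q' * q = q - 1 := by rw [hq'def]; field_simp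
  set V : ℝ → ℝ≥0∞ := fun t => Λ t ^ q * ENNReal.ofReal ((1 - t) ^ ((q - 1) / 2)) with hVdef
  set W : ℝ → ℝ≥0∞ := fun x => ENNReal.ofReal ((1 - x) ^ (-((q + 1) / 2))) with hWdef
  have hmW : Measurable W := by fun_prop
  have hmV : Measurable V := by fun_prop
  -- Step C: pointwise bound on the outer integrand
  have stepC : ∀ x ∈ Ico (0:ℝ) 1,
      ((ENNReal.ofReal (1 - x))⁻¹ * ∫⁻ t in Ico x 1, Λ t) ^ q
        ≤ ENNReal.ofReal (2 ^ (q - 1)) * (W x * ∫⁻ t in Ico x 1, V t) := by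
    intro x hx
    have hx1 : (0:ℝ) < 1 - x := by linarith [hx.2]
    have holder : (∫⁻ t in Ico x 1, Λ t)
        ≤ (∫⁻ t in Ico x 1, V t) ^ (1 / q)
          * (∫⁻ t in Ico x 1, ENNReal.ofReal ((1 - t) ^ (-(2⁻¹:ℝ)))) ^ (1 / q') := by
      set f : ℝ → ℝ≥0∞ := fun t => Λ t * ENNReal.ofReal ((1 - t) ^ θ) with hfdef
      set gg : ℝ → ℝ≥0∞ := fun t => ENNReal.ofReal ((1 - t) ^ (-θ)) with hggdef
      have hmf : AEMeasurable f (volume.restrict (Ico x 1)) := by fun_prop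
      have hmgg : AEMeasurable gg (volume.restrict (Ico x 1)) := by fun_prop
      have e1 : ∫⁻ t in Ico x 1, Λ t = ∫⁻ t in Ico x 1, (f * gg) t := by
        apply setLIntegral_congr_fun measurableSet_Ico
        intro t ht
        have hu : (0:ℝ) < 1 - t := by linarith [ht.2]
        simp only [Pi.mul_apply, hfdef, hggdef]
        rw [mul_assoc, ← ENNReal.ofReal_mul (Real.rpow_nonneg hu.le _),
          ← Real.rpow_add hu, add_neg_cancel, Real.rpow_zero, ENNReal.ofReal_one, mul_one]
      have e2 : ∫⁻ t in Ico x 1, f t ^ q = ∫⁻ t in Ico x 1, V t := by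
        apply setLIntegral_congr_fun measurableSet_Ico
        intro t ht
        have hu : (0:ℝ) < 1 - t := by linarith [ht.2]
        simp only [hfdef, hVdef]
        rw [ENNReal.mul_rpow_of_nonneg _ _ hq0.le,
          ENNReal.ofReal_rpow_of_nonneg (Real.rpow_nonneg hu.le _) hq0.le,
          ← Real.rpow_mul hu.le, hθq]
      have e3 : ∫⁻ t in Ico x 1, gg t ^ q'
          = ∫⁻ t in Ico x 1, ENNReal.ofReal ((1 - t) ^ (-(2⁻¹:ℝ))) := by
        apply setLIntegral_congr_fun measurableSet_Ico
        intro t ht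
        have hu : (0:ℝ) < 1 - t := by linarith [ht.2]
        simp only [hggdef]
        rw [ENNReal.ofReal_rpow_of_nonneg (Real.rpow_nonneg hu.le _) hpq.symm.nonneg,
          ← Real.rpow_mul hu.le, neg_mul, hθq']
        norm_num
      calc (∫⁻ t in Ico x 1, Λ t) = ∫⁻ t in Ico x 1, (f * gg) t := e1
        _ ≤ (∫⁻ t in Ico x 1, f t ^ q) ^ (1 / q)
            * (∫⁻ t in Ico x 1, gg t ^ q') ^ (1 / q') :=
            ENNReal.lintegral_mul_le_Lp_mul_Lq _ hpq hmf hmgg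
        _ = (∫⁻ t in Ico x 1, V t) ^ (1 / q)
            * (∫⁻ t in Ico x 1, ENNReal.ofReal ((1 - t) ^ (-(2⁻¹:ℝ)))) ^ (1 / q') := by
            rw [e2, e3]
    have hB : ∫⁻ t in Ico x 1, ENNReal.ofReal ((1 - t) ^ (-(2⁻¹:ℝ)))
        = ENNReal.ofReal (2 * (1 - x) ^ (2⁻¹:ℝ)) := by
      rw [setLIntegral_congr (Ico_ae_eq_Ioc (a := x) (b := 1)),
        lint_oneSub_rpow hx.2.le le_rfl (Or.inl (by norm_num)) (by norm_num)]
      congr 1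
      rw [show (-(2⁻¹:ℝ) + 1) = 2⁻¹ by norm_num, sub_self,
        Real.zero_rpow (by norm_num)]
      ring
    have h1 : (ENNReal.ofReal (1 - x))⁻¹ ^ q = ENNReal.ofReal ((1 - x) ^ (-q)) := by
      rw [ENNReal.inv_rpow, ENNReal.ofReal_rpow_of_pos hx1,
        ← ENNReal.ofReal_inv_of_pos (Real.rpow_pos_of_pos hx1 _),
        ← Real.rpow_neg hx1.le]
    have h2 : (2 * (1 - x) ^ (2⁻¹:ℝ)) ^ (q - 1)
        = 2 ^ (q - 1) * (1 - x) ^ ((q - 1) / 2) := by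
      rw [Real.mul_rpow (by norm_num) (by positivity), ← Real.rpow_mul hx1.le,
        show (2⁻¹ * (q - 1) : ℝ) = (q - 1) / 2 by ring]
    have h3 : (1 - x) ^ (-q) * (2 ^ (q - 1) * (1 - x) ^ ((q - 1) / 2))
        = 2 ^ (q - 1) * (1 - x) ^ (-((q + 1) / 2)) := by
      rw [show (-((q + 1) / 2) : ℝ) = -q + (q - 1) / 2 by ring, Real.rpow_add hx1]
      ring
    calc ((ENNReal.ofReal (1 - x))⁻¹ * ∫⁻ t in Ico x 1, Λ t) ^ q
        ≤ ((ENNReal.ofReal (1 - x))⁻¹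
            * ((∫⁻ t in Ico x 1, V t) ^ (1 / q)
              * ENNReal.ofReal (2 * (1 - x) ^ (2⁻¹:ℝ)) ^ (1 / q'))) ^ q := by
          gcongr
          rw [← hB]; exact holder
      _ = (ENNReal.ofReal (1 - x))⁻¹ ^ q * ((∫⁻ t in Ico x 1, V t) ^ (1 / q)) ^ q
            * (ENNReal.ofReal (2 * (1 - x) ^ (2⁻¹:ℝ)) ^ (1 / q')) ^ q := by
          rw [ENNReal.mul_rpow_of_nonneg _ _ hq0.le, ENNReal.mul_rpow_of_nonneg _ _ hq0.le]
          ring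
      _ = ENNReal.ofReal ((1 - x) ^ (-q)) * (∫⁻ t in Ico x 1, V t)
            * ENNReal.ofReal (2 ^ (q - 1) * (1 - x) ^ ((q - 1) / 2)) := by
          rw [← ENNReal.rpow_mul, ← ENNReal.rpow_mul, one_div_mul_cancel hq0.ne',
            ENNReal.rpow_one, hq'q, h1,
            ENNReal.ofReal_rpow_of_nonneg (by positivity) hq1.le, h2]
      _ = ENNReal.ofReal (2 ^ (q - 1)) * (W x * ∫⁻ t in Ico x 1, V t) := by
          have hkey : ENNReal.ofReal ((1 - x) ^ (-q))
                * ENNReal.ofReal (2 ^ (q - 1) * (1 - x) ^ ((q - 1) / 2))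
              = ENNReal.ofReal (2 ^ (q - 1)) * W x := by
            rw [← ENNReal.ofReal_mul (by positivity), h3, hWdef,
              ENNReal.ofReal_mul (by positivity)]
          rw [mul_right_comm, hkey, mul_assoc]
  -- Step E : inner-integral bound after swapping
  have stepE : ∀ t ∈ Ico (0:ℝ) 1,
      (∫⁻ x in Icc 0 t, W x) * V t ≤ ENNReal.ofReal (2 / (q - 1)) * Λ t ^ q := by
    intro t ht
    have hu : (0:ℝ) < 1 - t := by linarith [ht.2]
    have hr1 : (-((q + 1) / 2) + 1 : ℝ) = (1 - q) / 2 := by ring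
    have hIW : ∫⁻ x in Icc 0 t, W x
        = ENNReal.ofReal ((1 - (1 - t) ^ ((1 - q) / 2)) / ((1 - q) / 2)) := by
      rw [hWdef, setLIntegral_congr (Ioc_ae_eq_Icc (a := (0:ℝ)) (b := t)).symm,
        lint_oneSub_rpow ht.1 ht.2.le (Or.inr ht.2) (by intro h; rw [neg_eq_iff_eq_neg] at h; linarith [h]),
        hr1]
      norm_num
    have hIWle : ∫⁻ x in Icc 0 t, W x
        ≤ ENNReal.ofReal ((2 / (q - 1)) * (1 - t) ^ ((1 - q) / 2)) := by
      rw [hIW]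
      apply ENNReal.ofReal_le_ofReal
      have hA : (0:ℝ) ≤ (1 - t) ^ ((1 - q) / 2) := Real.rpow_nonneg hu.le _
      rw [div_le_iff_of_neg (by linarith : ((1 - q) / 2 : ℝ) < 0)]
      have : (2 / (q - 1) * (1 - t) ^ ((1 - q) / 2)) * ((1 - q) / 2)
          = -((1 - t) ^ ((1 - q) / 2)) := by field_simp; ring
      rw [this]; linarith
    calc (∫⁻ x in Icc 0 t, W x) * V t
        ≤ ENNReal.ofReal ((2 / (q - 1)) * (1 - t) ^ ((1 - q) / 2)) * V t := by gcongr
      _ = ENNReal.ofReal (2 / (q - 1)) * Λ t ^ q := by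
          rw [hVdef]
          simp only []
          rw [mul_comm (Λ t ^ q) _, ← mul_assoc, ← ENNReal.ofReal_mul (by positivity),
            mul_assoc (2 / (q - 1)), ← Real.rpow_add hu,
            show ((1 - q) / 2 + (q - 1) / 2 : ℝ) = 0 by ring, Real.rpow_zero, mul_one]
  -- assemble
  calc ∫⁻ x in Ico (0:ℝ) 1, ((ENNReal.ofReal (1 - x))⁻¹ * ∫⁻ t in Ico x 1, Λ t) ^ q
      ≤ ∫⁻ x in Ico (0:ℝ) 1, ENNReal.ofReal (2 ^ (q - 1)) * (W x * ∫⁻ t in Ico x 1, V t) :=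
        setLIntegral_mono' measurableSet_Ico stepC
    _ = ENNReal.ofReal (2 ^ (q - 1)) * ∫⁻ x in Ico (0:ℝ) 1, W x * ∫⁻ t in Ico x 1, V t :=
        lintegral_const_mul' _ _ ENNReal.ofReal_ne_top
    _ = ENNReal.ofReal (2 ^ (q - 1)) * ∫⁻ t in Ico (0:ℝ) 1, (∫⁻ x in Icc 0 t, W x) * V t := by
        rw [swap_lemma W V hmW hmV]
    _ ≤ ENNReal.ofReal (2 ^ (q - 1)) * ∫⁻ t in Ico (0:ℝ) 1, ENNReal.ofReal (2 / (q - 1)) * Λ t ^ q := by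
        exact mul_le_mul_right (setLIntegral_mono' measurableSet_Ico stepE) _
    _ = ENNReal.ofReal (2 ^ (q - 1) * (2 / (q - 1))) * ∫⁻ t in Ico (0:ℝ) 1, Λ t ^ q := by
        rw [lintegral_const_mul' _ _ ENNReal.ofReal_ne_top, ← mul_assoc,
          ← ENNReal.ofReal_mul (by positivity)]

lemma deriv_lint_right (hg : ContDiff ℝ 2 g) {q : ℝ} (hq : 1 < q) :
    ∫⁻ x in Ico (0:ℝ) 1, (‖deriv g x‖₊ : ℝ≥0∞) ^ q
      ≤ ENNReal.ofReal (2 ^ (q - 1) * (2 / (q - 1)))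
          * ∫⁻ t in Ico (0:ℝ) 1, (‖legendreD g t‖₊ : ℝ≥0∞) ^ q := by
  have hq0 : (0:ℝ) < q := lt_trans one_pos hq
  have hmono : ∀ x ∈ Ico (0:ℝ) 1, (‖deriv g x‖₊ : ℝ≥0∞) ^ q
      ≤ ((ENNReal.ofReal (1 - x))⁻¹ * ∫⁻ t in Ico x 1, (‖legendreD g t‖₊ : ℝ≥0∞)) ^ q := by
    intro x hx
    apply ENNReal.rpow_le_rpow _ hq0.le
    have := deriv_bound_right hg hx
    rwa [setLIntegral_congr (Ico_ae_eq_Icc (a := x) (b := (1:ℝ)))]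
  calc ∫⁻ x in Ico (0:ℝ) 1, (‖deriv g x‖₊ : ℝ≥0∞) ^ q
      ≤ ∫⁻ x in Ico (0:ℝ) 1,
          ((ENNReal.ofReal (1 - x))⁻¹ * ∫⁻ t in Ico x 1, (‖legendreD g t‖₊ : ℝ≥0∞)) ^ q :=
        setLIntegral_mono' measurableSet_Ico hmono
    _ ≤ _ := hardy hq _ ((legendreD_cont hg).measurable.nnnorm.coe_nnreal_ennreal)

lemma reflect_lint (f : ℝ → ℝ≥0∞) (s : Set ℝ) :
    ∫⁻ x in s, f (-x) = ∫⁻ y in -s, f y := by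
  have h := (Measure.measurePreserving_neg (volume : Measure ℝ)).setLIntegral_comp_emb
    (MeasurableEquiv.neg ℝ).measurableEmbedding f s
  simpa [Set.image_neg_eq_neg] using h

lemma legendreD_comp_neg (g : ℝ → ℝ) :
    legendreD (fun x => g (-x)) = fun x => legendreD g (-x) := by
  have h1 : (fun x : ℝ => (1 - x ^ 2) * deriv (fun y => g (-y)) x)
      = fun x : ℝ => -((1 - (-x) ^ 2) * deriv g (-x)) := by
    funext x
    rw [deriv_comp_neg]
    ring_nf
  funext x
  rw [legendreD, h1, legendreD]
  have h2 : deriv (fun x : ℝ => -((1 - (-x) ^ 2) * deriv g (-x))) x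
      = -deriv (fun x : ℝ => ((1 - (-x) ^ 2) * deriv g (-x))) x := deriv.neg
  rw [h2, deriv_comp_neg (f := fun y : ℝ => (1 - y ^ 2) * deriv g y), neg_neg]

lemma deriv_lint_both (hg : ContDiff ℝ 2 g) {q : ℝ} (hq : 1 < q) :
    ∫⁻ x in Icc (-1:ℝ) 1, (‖deriv g x‖₊ : ℝ≥0∞) ^ q
      ≤ 2 * ENNReal.ofReal (2 ^ (q - 1) * (2 / (q - 1)))
          * ∫⁻ t in Icc (-1:ℝ) 1, (‖legendreD g t‖₊ : ℝ≥0∞) ^ q := by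
  set Cq := ENNReal.ofReal (2 ^ (q - 1) * (2 / (q - 1))) with hCq
  set F : ℝ → ℝ≥0∞ := fun x => (‖deriv g x‖₊ : ℝ≥0∞) ^ q with hF
  set R : ℝ → ℝ≥0∞ := fun t => (‖legendreD g t‖₊ : ℝ≥0∞) ^ q with hR
  set g' : ℝ → ℝ := fun x => g (-x) with hg'def
  have hg' : ContDiff ℝ 2 g' := hg.comp contDiff_neg
  have hsplit : ∫⁻ x in Icc (-1:ℝ) 1, F x
      = (∫⁻ x in Ico (-1:ℝ) 0, F x) + ∫⁻ x in Ico (0:ℝ) 1, F x := by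
    rw [setLIntegral_congr (Ico_ae_eq_Icc (a := (-1:ℝ)) (b := (1:ℝ))).symm,
      ← Ico_union_Ico_eq_Ico (by norm_num : (-1:ℝ) ≤ 0) (by norm_num : (0:ℝ) ≤ 1),
      lintegral_union measurableSet_Ico (Set.Ico_disjoint_Ico_same)]
  have hright : ∫⁻ x in Ico (0:ℝ) 1, F x ≤ Cq * ∫⁻ t in Icc (-1:ℝ) 1, R t := by
    refine le_trans (deriv_lint_right hg hq) ?_
    gcongr
    intro t ht
    exact ⟨by linarith [ht.1], ht.2.le⟩
  have hleft : ∫⁻ x in Ico (-1:ℝ) 0, F x ≤ Cq * ∫⁻ t in Icc (-1:ℝ) 1, R t := by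
    have e1 : ∫⁻ x in Ico (-1:ℝ) 0, F x
        = ∫⁻ y in Ioc (0:ℝ) 1, (‖deriv g' y‖₊ : ℝ≥0∞) ^ q := by
      have : ∀ x : ℝ, F x = (fun y => (‖deriv g' y‖₊ : ℝ≥0∞) ^ q) (-x) := by
        intro x
        simp only [hF, hg'def, deriv_comp_neg, nnnorm_neg, neg_neg]
      simp_rw [this]
      rw [reflect_lint (fun y => (‖deriv g' y‖₊ : ℝ≥0∞) ^ q) (Ico (-1:ℝ) 0)]
      norm_num
    have e2 : ∫⁻ y in Ioc (0:ℝ) 1, (‖deriv g' y‖₊ : ℝ≥0∞) ^ q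
        = ∫⁻ y in Ico (0:ℝ) 1, (‖deriv g' y‖₊ : ℝ≥0∞) ^ q :=
      setLIntegral_congr ((Ioc_ae_eq_Icc).trans (Ico_ae_eq_Icc).symm)
    have e3 : ∫⁻ t in Ico (0:ℝ) 1, (‖legendreD g' t‖₊ : ℝ≥0∞) ^ q
        = ∫⁻ t in Ioc (-1:ℝ) 0, R t := by
      have : ∀ t : ℝ, (‖legendreD g' t‖₊ : ℝ≥0∞) ^ q = R (-t) := by
        intro t
        simp only [hR, hg'def, legendreD_comp_neg g]
      simp_rw [this]
      rw [reflect_lint R (Ico (0:ℝ) 1)]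
      norm_num
    calc ∫⁻ x in Ico (-1:ℝ) 0, F x
        = ∫⁻ y in Ico (0:ℝ) 1, (‖deriv g' y‖₊ : ℝ≥0∞) ^ q := by rw [e1, e2]
      _ ≤ Cq * ∫⁻ t in Ico (0:ℝ) 1, (‖legendreD g' t‖₊ : ℝ≥0∞) ^ q := deriv_lint_right hg' hq
      _ = Cq * ∫⁻ t in Ioc (-1:ℝ) 0, R t := by rw [e3]
      _ ≤ Cq * ∫⁻ t in Icc (-1:ℝ) 1, R t := by
          gcongr
          intro t ht
          exact ⟨ht.1.le, by linarith [ht.2]⟩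
  calc ∫⁻ x in Icc (-1:ℝ) 1, F x
      = (∫⁻ x in Ico (-1:ℝ) 0, F x) + ∫⁻ x in Ico (0:ℝ) 1, F x := hsplit
    _ ≤ Cq * (∫⁻ t in Icc (-1:ℝ) 1, R t) + Cq * ∫⁻ t in Icc (-1:ℝ) 1, R t :=
        add_le_add hleft hright
    _ = 2 * Cq * ∫⁻ t in Icc (-1:ℝ) 1, R t := by ring

lemma eLpNorm_deriv_le_top (hg : ContDiff ℝ 2 g) :
    lpI ⊤ (deriv g) ≤ lpI ⊤ (legendreD g) := by
  rw [lpI, lpI, eLpNorm_exponent_top, eLpNorm_exponent_top, eLpNormEssSup, eLpNormEssSup]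
  set M := essSup (fun x => (‖legendreD g x‖₊ : ℝ≥0∞)) (volume.restrict (Icc (-1:ℝ) 1)) with hM
  apply essSup_le_of_ae_le (hfbdd := by isBoundedDefault)
  have hres : volume.restrict (Ioo (-1:ℝ) 1) = volume.restrict (Icc (-1:ℝ) 1) :=
    Measure.restrict_congr_set Ioo_ae_eq_Icc
  have hmem : ∀ᵐ x ∂volume.restrict (Icc (-1:ℝ) 1), x ∈ Ioo (-1:ℝ) 1 := by
    rw [← hres]
    exact ae_restrict_mem measurableSet_Ioo
  filter_upwards [hmem] with x hx
  rcases le_or_gt 0 x with h0 | h0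
  · refine le_trans (deriv_bound_right hg ⟨h0, hx.2⟩) ?_
    have h1x : (0:ℝ) < 1 - x := by linarith [hx.2]
    have hsub : Icc x (1:ℝ) ⊆ Icc (-1:ℝ) 1 := fun t ht => ⟨by linarith [ht.1], ht.2⟩
    have hae : ∀ᵐ t ∂volume.restrict (Icc x (1:ℝ)),
        (‖legendreD g t‖₊ : ℝ≥0∞) ≤ M :=
      ae_restrict_of_ae_restrict_of_subset hsub (ENNReal.ae_le_essSup _)
    have hint : ∫⁻ t in Icc x 1, (‖legendreD g t‖₊ : ℝ≥0∞) ≤ M * ENNReal.ofReal (1 - x) := by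
      calc ∫⁻ t in Icc x 1, (‖legendreD g t‖₊ : ℝ≥0∞) ≤ ∫⁻ _ in Icc x 1, M :=
            lintegral_mono_ae hae
        _ = M * volume (Icc x 1) := setLIntegral_const _ _
        _ = M * ENNReal.ofReal (1 - x) := by rw [Real.volume_Icc]
    calc (ENNReal.ofReal (1 - x))⁻¹ * ∫⁻ t in Icc x 1, (‖legendreD g t‖₊ : ℝ≥0∞)
        ≤ (ENNReal.ofReal (1 - x))⁻¹ * (M * ENNReal.ofReal (1 - x)) :=
          mul_le_mul_right hint _
      _ = M * ((ENNReal.ofReal (1 - x))⁻¹ * ENNReal.ofReal (1 - x)) := by ring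
      _ = M := by
          rw [ENNReal.inv_mul_cancel (ENNReal.ofReal_pos.mpr h1x).ne' ENNReal.ofReal_ne_top, mul_one]
  · refine le_trans (deriv_bound_left hg ⟨hx.1, h0.le⟩) ?_
    have h1x : (0:ℝ) < 1 + x := by linarith [hx.1]
    have hsub : Icc (-1:ℝ) x ⊆ Icc (-1:ℝ) 1 := fun t ht => ⟨ht.1, by linarith [ht.2, hx.2]⟩
    have hae : ∀ᵐ t ∂volume.restrict (Icc (-1:ℝ) x),
        (‖legendreD g t‖₊ : ℝ≥0∞) ≤ M :=
      ae_restrict_of_ae_restrict_of_subset hsub (ENNReal.ae_le_essSup _)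
    have hint : ∫⁻ t in Icc (-1) x, (‖legendreD g t‖₊ : ℝ≥0∞) ≤ M * ENNReal.ofReal (1 + x) := by
      calc ∫⁻ t in Icc (-1) x, (‖legendreD g t‖₊ : ℝ≥0∞) ≤ ∫⁻ _ in Icc (-1) x, M :=
            lintegral_mono_ae hae
        _ = M * volume (Icc (-1) x) := setLIntegral_const _ _
        _ = M * ENNReal.ofReal (1 + x) := by rw [Real.volume_Icc, show x - (-1) = 1 + x by ring]
    calc (ENNReal.ofReal (1 + x))⁻¹ * ∫⁻ t in Icc (-1) x, (‖legendreD g t‖₊ : ℝ≥0∞)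
        ≤ (ENNReal.ofReal (1 + x))⁻¹ * (M * ENNReal.ofReal (1 + x)) :=
          mul_le_mul_right hint _
      _ = M * ((ENNReal.ofReal (1 + x))⁻¹ * ENNReal.ofReal (1 + x)) := by ring
      _ = M := by
          rw [ENNReal.inv_mul_cancel (ENNReal.ofReal_pos.mpr h1x).ne' ENNReal.ofReal_ne_top, mul_one]

lemma exists_K (p : ℝ≥0∞) (hp : 1 < p) : ∃ K : ℝ≥0∞, K ≠ ∞ ∧
    ∀ g : ℝ → ℝ, ContDiff ℝ 2 g → lpI p (deriv g) ≤ K * lpI p (legendreD g) := by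
  by_cases hptop : p = ⊤
  · subst hptop
    exact ⟨1, one_ne_top, fun g hg => by simpa using eLpNorm_deriv_le_top hg⟩
  · set q := p.toReal with hqdef
    have hq : 1 < q := by
      have := ENNReal.toReal_strict_mono hptop hp
      simpa using this
    have hq0 : (0:ℝ) < q := lt_trans one_pos hq
    refine ⟨(2 * ENNReal.ofReal (2 ^ (q - 1) * (2 / (q - 1)))) ^ (1 / q),
      ENNReal.rpow_ne_top_of_nonneg (by positivity)
        (by exact ENNReal.mul_ne_top (by norm_num) ENNReal.ofReal_ne_top), ?_⟩
    intro g hg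
    have h0 : p ≠ 0 := (lt_trans zero_lt_one hp).ne'
    rw [lpI, lpI, eLpNorm_eq_lintegral_rpow_enorm_toReal h0 hptop,
      eLpNorm_eq_lintegral_rpow_enorm_toReal h0 hptop]
    calc (∫⁻ x in Icc (-1:ℝ) 1, (‖deriv g x‖₊ : ℝ≥0∞) ^ q) ^ (1 / q)
        ≤ ((2 * ENNReal.ofReal (2 ^ (q - 1) * (2 / (q - 1))))
            * ∫⁻ t in Icc (-1:ℝ) 1, (‖legendreD g t‖₊ : ℝ≥0∞) ^ q) ^ (1 / q) :=
          ENNReal.rpow_le_rpow (deriv_lint_both hg hq) (by positivity)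
      _ = (2 * ENNReal.ofReal (2 ^ (q - 1) * (2 / (q - 1)))) ^ (1 / q)
            * (∫⁻ t in Icc (-1:ℝ) 1, (‖legendreD g t‖₊ : ℝ≥0∞) ^ q) ^ (1 / q) :=
          ENNReal.mul_rpow_of_nonneg _ _ (by positivity)

lemma phi_sq_eq (hg : ContDiff ℝ 2 g) {x : ℝ} (hx : x ∈ Icc (-1:ℝ) 1) :
    phi x ^ 2 * iteratedDeriv 2 g x = legendreD g x + 2 * x * deriv g x := by
  have hsq : (0:ℝ) ≤ 1 - x ^ 2 := by nlinarith [hx.1, hx.2]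
  have hphi : phi x ^ 2 = 1 - x ^ 2 := Real.sq_sqrt hsq
  have hd1 : ContDiff ℝ 1 (deriv g) :=
    (contDiff_succ_iff_deriv.mp (show ContDiff ℝ (1+1:ℕ) g from hg)).2.2
  have hld : legendreD g x = -(2*x) * deriv g x + (1 - x^2) * deriv (deriv g) x := by
    have hmul := deriv_mul (c := fun x : ℝ => 1 - x ^ 2) (d := deriv g) (x := x)
      (by fun_prop) ((hd1.differentiable one_ne_zero).differentiableAt)
    rw [legendreD, show (fun x : ℝ => (1 - x ^ 2) * deriv g x) = (fun x : ℝ => 1 - x ^ 2) * deriv g from rfl, hmul]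
    have hderiv : deriv (fun x : ℝ => 1 - x ^ 2) x = -(2*x) := by
      have h := ((hasDerivAt_pow 2 x).const_sub 1).deriv
      simpa using h
    rw [hderiv]
  have h2 : iteratedDeriv 2 g x = deriv (deriv g) x := by
    simp [iteratedDeriv_succ, iteratedDeriv_one]
  rw [hphi, h2, hld]; ring

lemma crucial (p : ℝ≥0∞) (hp : 1 < p) : ∃ K : ℝ≥0∞, 1 ≤ K ∧ K ≠ ∞ ∧
    ∀ g : ℝ → ℝ, ContDiff ℝ 2 g →
      lpI p (fun x => phi x ^ 2 * iteratedDeriv 2 g x) ≤ K * lpI p (legendreD g) := by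
  obtain ⟨K0, hK0top, hK0⟩ := exists_K p hp
  refine ⟨1 + 2 * K0, le_add_of_nonneg_right zero_le, ?_, ?_⟩
  · simp [ENNReal.add_ne_top, ENNReal.mul_ne_top, hK0top]
  intro g hg
  have hcont_d : Continuous (deriv g) := hg.continuous_deriv (by norm_num)
  have hcont_L : Continuous (legendreD g) := legendreD_cont hg
  have hae : (fun x => phi x ^ 2 * iteratedDeriv 2 g x)
      =ᵐ[volume.restrict (Icc (-1:ℝ) 1)] (fun x => legendreD g x + 2 * x * deriv g x) := by
    filter_upwards [ae_restrict_mem measurableSet_Icc] with x hx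
    exact phi_sq_eq hg hx
  have tri : eLpNorm (fun x => legendreD g x + 2 * x * deriv g x) p
        (volume.restrict (Icc (-1:ℝ) 1))
      ≤ eLpNorm (legendreD g) p (volume.restrict (Icc (-1:ℝ) 1))
        + eLpNorm (fun x => 2 * x * deriv g x) p (volume.restrict (Icc (-1:ℝ) 1)) :=
    eLpNorm_add_le hcont_L.aestronglyMeasurable
      (((continuous_const.mul continuous_id).mul hcont_d).aestronglyMeasurable) hp.le
  have h2x : eLpNorm (fun x => 2 * x * deriv g x) p (volume.restrict (Icc (-1:ℝ) 1))
      ≤ 2 * eLpNorm (deriv g) p (volume.restrict (Icc (-1:ℝ) 1)) := by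
    have hmono : ∀ᵐ x ∂volume.restrict (Icc (-1:ℝ) 1),
        ‖2 * x * deriv g x‖ ≤ ‖((2:ℝ) • deriv g) x‖ := by
      filter_upwards [ae_restrict_mem measurableSet_Icc] with x hx
      simp only [Pi.smul_apply, smul_eq_mul, Real.norm_eq_abs, abs_mul]
      have h1 : |x| ≤ 1 := abs_le.mpr ⟨hx.1, hx.2⟩
      have h2 : |(2:ℝ)| = 2 := by norm_num
      rw [h2]
      nlinarith [abs_nonneg (deriv g x), abs_nonneg x,
        mul_le_mul_of_nonneg_right h1 (abs_nonneg (deriv g x))]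
    calc eLpNorm (fun x => 2 * x * deriv g x) p (volume.restrict (Icc (-1:ℝ) 1))
        ≤ eLpNorm ((2:ℝ) • deriv g) p (volume.restrict (Icc (-1:ℝ) 1)) :=
          eLpNorm_mono_ae hmono
      _ = ‖(2:ℝ)‖₊ • eLpNorm (deriv g) p (volume.restrict (Icc (-1:ℝ) 1)) :=
          eLpNorm_const_smul _ _ _ _
      _ = 2 * eLpNorm (deriv g) p (volume.restrict (Icc (-1:ℝ) 1)) := by
          rw [ENNReal.smul_def, smul_eq_mul]
          norm_num
  calc lpI p (fun x => phi x ^ 2 * iteratedDeriv 2 g x)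
      = eLpNorm (fun x => legendreD g x + 2 * x * deriv g x) p
          (volume.restrict (Icc (-1:ℝ) 1)) := by
        rw [lpI]; exact eLpNorm_congr_ae hae
    _ ≤ eLpNorm (legendreD g) p (volume.restrict (Icc (-1:ℝ) 1))
        + eLpNorm (fun x => 2 * x * deriv g x) p (volume.restrict (Icc (-1:ℝ) 1)) := tri
    _ ≤ eLpNorm (legendreD g) p (volume.restrict (Icc (-1:ℝ) 1))
        + 2 * (K0 * lpI p (legendreD g)) := by
        refine add_le_add_right ?_ _
        refine le_trans h2x ?_
        exact mul_le_mul_right (hK0 g hg) _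
    _ = (1 + 2 * K0) * lpI p (legendreD g) := by rw [lpI]; ring

/-- (4.2): for `1 < p ≤ ∞`,
`K_{2,φ}(f,t²)_p ≤ C K₂(f, (d/dx)(1-x²)(d/dx), t²)_p`. -/
theorem Kfunc2phi_le_Kfunc2Legendre (p : ℝ≥0∞) (hp : 1 < p) :
    ∃ C : ℝ≥0, 0 < C ∧
      ∀ f : ℝ → ℝ, MemLp f p (volume.restrict (Icc (-1 : ℝ) 1)) →
        ∀ t : ℝ, 0 < t →
          KfuncPhi 2 f (t ^ 2) p ≤ C * Kfunc2Legendre f (t ^ 2) p := by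
  obtain ⟨K, hK1, hKtop, hK⟩ := crucial p hp
  have hK0 : K ≠ 0 := by intro h; rw [h] at hK1; exact (not_le.mpr zero_lt_one) hK1
  refine ⟨K.toNNReal, ?_, ?_⟩
  · exact ENNReal.toNNReal_pos hK0 hKtop
  intro f _ t _
  have hcoe : (K.toNNReal : ℝ≥0∞) = K := ENNReal.coe_toNNReal hKtop
  rw [hcoe]
  set s := t ^ 2
  have hper : ∀ (g : ℝ → ℝ), ContDiff ℝ 2 g →
      KfuncPhi 2 f s p ≤ K * (lpI p (fun x => f x - g x)
        + ENNReal.ofReal s * lpI p (legendreD g)) := by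
    intro g hg
    calc KfuncPhi 2 f s p
        ≤ lpI p (fun x => f x - g x)
          + ENNReal.ofReal s * lpI p (fun x => phi x ^ 2 * iteratedDeriv 2 g x) := by
          exact iInf₂_le g hg
      _ ≤ lpI p (fun x => f x - g x) + ENNReal.ofReal s * (K * lpI p (legendreD g)) := by
          exact add_le_add_right (mul_le_mul_right (hK g hg) _) _
      _ ≤ K * lpI p (fun x => f x - g x) + K * (ENNReal.ofReal s * lpI p (legendreD g)) := by
          refine add_le_add (le_mul_of_one_le_left zero_le hK1) ?_
          rw [← mul_assoc, mul_comm (ENNReal.ofReal s) K, mul_assoc]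
      _ = K * (lpI p (fun x => f x - g x) + ENNReal.ofReal s * lpI p (legendreD g)) := by
          rw [mul_add]
  have hdiv : KfuncPhi 2 f s p / K ≤ Kfunc2Legendre f s p := by
    rw [Kfunc2Legendre]
    refine le_iInf₂ ?_
    intro g hg
    rw [ENNReal.div_le_iff_le_mul (Or.inl hK0) (Or.inl hKtop), mul_comm]
    exact hper g hg
  have := (ENNReal.div_le_iff_le_mul (Or.inl hK0) (Or.inl hKtop)).mp hdiv
  rwa [mul_comm] at this
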